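/- For all n ≥ 1 and k ≥ 1, the number of permutations π ∈ S_n with udr(π) = k and pk(π⁻¹) = 0 equals the binomial coefficient C(n−1, k−1). -/

import Mathlib

open Finset

section Defs
variable {α : Type*} [LinearOrder α]

/-- Number of descents of a list. -/
def descentsCount : List α → ℕ
  | a :: b :: l => (if b < a then 1 else 0) + descentsCount (b :: l)
  | _ => 0

/-- Number of (interior) peaks of a list. -/
def peaksCount : List α → ℕ
  | a :: b :: c :: l => (if a < b ∧ c < b then 1 else 0) + peaksCount (b :: c :: l)
  | _ => 0

/-- 1 if the list starts with a descent, else 0. -/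
def initDesc : List α → ℕ
  | a :: b :: _ => if b < a then 1 else 0
  | _ => 0

/-- Number of left peaks of a list. -/
def leftPeaksCount (l : List α) : ℕ := initDesc l + peaksCount l

/-- Number of interior direction changes. -/
def turnsCount : List α → ℕ
  | a :: b :: c :: l => (if (a < b ∧ c < b) ∨ (b < a ∧ b < c) then 1 else 0) + turnsCount (b :: c :: l)
  | _ => 0

/-- Number of biruns (maximal monotone consecutive subsequences). -/
def birunsCount (l : List α) : ℕ := if l = [] then 0 else turnsCount l + 1

/-- Number of up-down runs. -/
def udrCount (l : List α) : ℕ := initDesc l + birunsCount l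

/-- `IsAltFrom true l` : the list `l` alternates starting with a descent. -/
def IsAltFrom : Bool → List α → Prop
  | _, [] => True
  | _, [_] => True
  | true, a :: b :: l => b < a ∧ IsAltFrom false (b :: l)
  | false, a :: b :: l => a < b ∧ IsAltFrom true (b :: l)

end Defs

def desP {n : ℕ} (π : Equiv.Perm (Fin n)) : ℕ := descentsCount (List.ofFn ⇑π)
def pkP {n : ℕ} (π : Equiv.Perm (Fin n)) : ℕ := peaksCount (List.ofFn ⇑π)
def lpkP {n : ℕ} (π : Equiv.Perm (Fin n)) : ℕ := leftPeaksCount (List.ofFn ⇑π)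
def brP {n : ℕ} (π : Equiv.Perm (Fin n)) : ℕ := birunsCount (List.ofFn ⇑π)
def udrP {n : ℕ} (π : Equiv.Perm (Fin n)) : ℕ := udrCount (List.ofFn ⇑π)
def AltP {n : ℕ} (π : Equiv.Perm (Fin n)) : Prop := IsAltFrom true (List.ofFn ⇑π)

def fixedCount {n : ℕ} (π : Equiv.Perm (Fin n)) : ℕ :=
  (Finset.univ.filter fun x => π x = x).card
def cycleCount {n : ℕ} (π : Equiv.Perm (Fin n)) : ℕ := π.cycleType.card + fixedCount π
def oddCycleCount {n : ℕ} (π : Equiv.Perm (Fin n)) : ℕ :=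
  (π.cycleType.filter fun l => l % 2 = 1).card + fixedCount π

noncomputable def stirC (n k : ℕ) : ℕ := Nat.card {π : Equiv.Perm (Fin n) // cycleCount π = k}
noncomputable def dOdd (n k : ℕ) : ℕ :=
  Nat.card {π : Equiv.Perm (Fin n) // cycleCount π = k ∧ ∀ l ∈ π.cycleType, l % 2 = 1}
noncomputable def eOdd (n k : ℕ) : ℕ := Nat.card {π : Equiv.Perm (Fin n) // oddCycleCount π = k}
noncomputable def fOdd (n k m : ℕ) : ℕ :=
  Nat.card {π : Equiv.Perm (Fin n) // oddCycleCount π = k ∧ cycleCount π = m}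

noncomputable def eulerE (k : ℕ) : ℕ := Nat.card {π : Equiv.Perm (Fin k) // AltP π}


namespace UdrAux
variable {α : Type*} [LinearOrder α]

def ascL : List α → List Bool
  | a :: b :: t => decide (a < b) :: ascL (b :: t)
  | _ => []

def chgL : List Bool → ℕ
  | x :: y :: t => (if x ≠ y then 1 else 0) + chgL (y :: t)
  | _ => 0

lemma turns_eq : ∀ (l : List α), l.Chain' (· ≠ ·) → turnsCount l = chgL (ascL l)
  | [], _ => rfl
  | [_], _ => rfl
  | [_, _], _ => rfl
  | a :: b :: c :: t, h => by
    have hab : a ≠ b := (List.isChain_cons_cons.mp h).1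
    have h2 := (List.isChain_cons_cons.mp h).2
    have hbc : b ≠ c := (List.isChain_cons_cons.mp h2).1
    have ih := turns_eq (b :: c :: t) h2
    show (if (a < b ∧ c < b) ∨ (b < a ∧ b < c) then 1 else 0) + turnsCount (b :: c :: t)
        = (if decide (a < b) ≠ decide (b < c) then 1 else 0) + chgL (ascL (b :: c :: t))
    rw [ih]
    congr 1
    rcases lt_or_gt_of_ne hab with h1 | h1 <;> rcases lt_or_gt_of_ne hbc with hh | hh <;>
      simp [h1, hh, not_lt_of_gt, lt_asymm]

lemma udr_eq : ∀ (l : List α), l.Chain' (· ≠ ·) → l ≠ [] → udrCount l = chgL (true :: ascL l) + 1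
  | [], _, hne => absurd rfl hne
  | [a], _, _ => rfl
  | a :: b :: t, h, _ => by
    have hab : a ≠ b := (List.isChain_cons_cons.mp h).1
    have ht := turns_eq (a :: b :: t) h
    have hasc : ascL (a :: b :: t) = decide (a < b) :: ascL (b :: t) := rfl
    have hchg : ∀ x l', chgL (true :: x :: l') = (if true ≠ x then 1 else 0) + chgL (x :: l') :=
      fun x l' => rfl
    have hid : initDesc (a :: b :: t) = if b < a then 1 else 0 := rfl
    simp only [udrCount, birunsCount, if_neg (by simp : ¬(a :: b :: t = [])), ht, hasc, hchg, hid]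
    rcases lt_or_gt_of_ne hab with h1 | h1 <;> simp [h1, not_lt_of_gt, lt_asymm] <;> omega

lemma ascL_ofFn : ∀ (n : ℕ) (f : Fin (n+1) → α),
    ascL (List.ofFn f) = List.ofFn (fun i : Fin n => decide (f i.castSucc < f i.succ))
  | 0, f => by simp [List.ofFn_succ, ascL]
  | n+1, f => by
    have ih := ascL_ofFn n (fun i => f i.succ)
    have e2 : List.ofFn (fun i : Fin (n+1) => f i.succ)
        = f (Fin.succ 0) :: List.ofFn fun i : Fin n => f i.succ.succ := List.ofFn_succ
    rw [List.ofFn_succ (f := f), e2]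
    show decide (f 0 < f (Fin.succ 0)) :: ascL (f (Fin.succ 0) :: List.ofFn fun i : Fin n => f i.succ.succ)
        = _
    rw [← e2, ih, List.ofFn_succ (f := fun i : Fin (n+1) => decide (f i.castSucc < f i.succ))]
    rfl


lemma peaks_zero : ∀ (l : List α), peaksCount l = 0 ↔
    ∀ i, ∀ (h : i + 2 < l.length), ¬ ((l[i]'(by omega)) < (l[i+1]'(by omega)) ∧ (l[i+2]'h) < (l[i+1]'(by omega)))
  | [] => by constructor
             · intro _ i h; simp at h
             · intro _; rfl
  | [a] => by constructor
              · intro _ i h; simp at h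
              · intro _; rfl
  | [a, b] => by constructor
                 · intro _ i h; simp at h
                 · intro _; rfl
  | a :: b :: c :: t => by
    have ih := peaks_zero (b :: c :: t)
    show (if a < b ∧ c < b then 1 else 0) + peaksCount (b :: c :: t) = 0 ↔ _
    constructor
    · intro h i hi
      have h1 : ¬ (a < b ∧ c < b) := by by_contra hc; simp [hc] at h
      have h2 := ih.mp (by by_contra hc; · simp at h; omega)
      match i with
      | 0 => simpa using h1
      | i+1 =>
        have hi' : i + 2 < (b :: c :: t).length := by simp at hi ⊢; omega
        have := h2 i hi'
        simpa using this
    · intro h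
      have h1 : ¬ (a < b ∧ c < b) := by
        have := h 0 (by simp)
        simpa using this
      rw [if_neg h1, Nat.zero_add, ih]
      intro i hi
      have hi2 : (i+1) + 2 < (a :: b :: c :: t).length := by simp at hi ⊢; omega
      have := h (i+1) hi2
      simpa using this

variable {m : ℕ}

def MinT (π : Equiv.Perm (Fin (m+1))) (j : Fin (m+1)) : Prop := ∀ i, i < j → π j < π i
def MaxT (π : Equiv.Perm (Fin (m+1))) (j : Fin (m+1)) : Prop := ∀ i, i < j → π i < π j
def QP (π : Equiv.Perm (Fin (m+1))) : Prop := ∀ j, MaxT π j ∨ MinT π j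

instance (π : Equiv.Perm (Fin (m+1))) (j : Fin (m+1)) : Decidable (MinT π j) :=
  decidable_of_iff (∀ i, i < j → π j < π i) Iff.rfl

instance (π : Equiv.Perm (Fin (m+1))) (j : Fin (m+1)) : Decidable (MaxT π j) :=
  decidable_of_iff (∀ i, i < j → π i < π j) Iff.rfl
def Phi (π : Equiv.Perm (Fin (m+1))) : Fin m → Bool := fun i => decide (π i.castSucc < π i.succ)
def dtot (w : Fin m → Bool) : ℕ := (univ.filter fun i => w i = false).card
def dlt (w : Fin m → Bool) (j : Fin (m+1)) : ℕ :=
  (univ.filter fun i : Fin m => (i : ℕ) < (j : ℕ) ∧ w i = false).card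

lemma card_lt_fin {N : ℕ} (v : Fin N) : (univ.filter fun x => x < v).card = (v : ℕ) := by
  rw [show (univ.filter fun x : Fin N => x < v) = Finset.Iio v from by ext x; simp]
  simp

lemma val_card (π : Equiv.Perm (Fin (m+1))) (j : Fin (m+1)) :
    ((π j : ℕ)) = (univ.filter fun j' => π j' < π j).card := by
  have hb := Finset.card_bij (s := univ.filter fun j' => π j' < π j)
      (t := univ.filter fun x => x < π j) (fun a _ => π a)
      (by intro a ha; simp at ha ⊢; exact ha)
      (by intro a _ b _ h; exact π.injective h)
      (by intro b hb; simp at hb; exact ⟨π.symm b, by simp [hb], by simp⟩)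
  rw [hb, card_lt_fin]

lemma minT_iff (π : Equiv.Perm (Fin (m+1))) (hQ : QP π) (i : Fin m) :
    MinT π i.succ ↔ Phi π i = false := by
  constructor
  · intro h
    have h2 := h i.castSucc (Fin.castSucc_lt_succ (i := i))
    simp only [Phi, decide_eq_false_iff_not]
    exact fun hc => absurd hc (not_lt_of_gt h2)
  · intro h
    rcases hQ i.succ with hmax | hmin
    · exfalso
      have := hmax i.castSucc (Fin.castSucc_lt_succ (i := i))
      simp only [Phi, decide_eq_false_iff_not] at h
      exact h this
    · exact hmin

lemma card_min_after (π : Equiv.Perm (Fin (m+1))) (hQ : QP π) (j : Fin (m+1)) :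
    (univ.filter fun j' => j < j' ∧ MinT π j').card + dlt (Phi π) j = dtot (Phi π) := by
  classical
  have hb := Finset.card_bij
      (s := univ.filter fun i : Fin m => (j : ℕ) ≤ (i : ℕ) ∧ Phi π i = false)
      (t := univ.filter fun j' => j < j' ∧ MinT π j') (fun i _ => i.succ)
      (by
        intro i hi; simp only [mem_filter, mem_univ, true_and] at hi ⊢
        refine ⟨?_, (minT_iff π hQ i).mpr hi.2⟩
        rw [Fin.lt_def]; simp; omega)
      (by intro a _ b _ h; exact Fin.succ_injective _ h)
      (by
        intro j' hj'; simp only [mem_filter, mem_univ, true_and] at hj'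
        have h0 : j' ≠ 0 := by
          intro h; rw [h] at hj'; exact absurd hj'.1 (Fin.not_lt_zero _)
        obtain ⟨i, hi⟩ := Fin.exists_succ_eq_of_ne_zero h0
        refine ⟨i, ?_, hi⟩
        simp only [mem_filter, mem_univ, true_and]
        constructor
        · have := hj'.1; rw [← hi, Fin.lt_def] at this; simp at this; omega
        · refine (minT_iff π hQ i).mp ?_
          rw [hi]; exact hj'.2)
  rw [← hb, dlt, dtot]
  have := Finset.card_filter_add_card_filter_not
      (s := univ.filter fun i : Fin m => Phi π i = false) (p := fun i => (i : ℕ) < (j : ℕ))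

  rw [Finset.filter_filter, Finset.filter_filter] at this
  have e1 : (univ.filter fun i : Fin m => Phi π i = false ∧ (i:ℕ) < (j:ℕ))
      = (univ.filter fun i : Fin m => (i:ℕ) < (j:ℕ) ∧ Phi π i = false) := by
    apply Finset.filter_congr; intro x _; simp [and_comm]
  have e2 : (univ.filter fun i : Fin m => Phi π i = false ∧ ¬ (i:ℕ) < (j:ℕ))
      = (univ.filter fun i : Fin m => (j:ℕ) ≤ (i:ℕ) ∧ Phi π i = false) := by
    apply Finset.filter_congr; intro x _; simp [and_comm]
  rw [e1, e2] at this
  omega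

lemma val_min (π : Equiv.Perm (Fin (m+1))) (hQ : QP π) (j : Fin (m+1)) (hmin : MinT π j) :
    ((π j : ℕ)) + dlt (Phi π) j = dtot (Phi π) := by
  rw [val_card]
  have hset : (univ.filter fun j' => π j' < π j) = (univ.filter fun j' => j < j' ∧ MinT π j') := by
    ext j'
    simp only [mem_filter, mem_univ, true_and]
    constructor
    · intro hlt
      have hne : j' ≠ j := fun h => by rw [h] at hlt; exact lt_irrefl _ hlt
      have hgt : j < j' := by
        rcases lt_or_gt_of_ne hne with h | h
        · exact absurd hlt (asymm (hmin j' h))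
        · exact h
      refine ⟨hgt, ?_⟩
      rcases hQ j' with hmax | hmin'
      · exact absurd hlt (asymm (hmax j hgt))
      · exact hmin'
    · intro ⟨hgt, hmin'⟩; exact hmin' j hgt
  rw [hset]
  exact card_min_after π hQ j

lemma val_max (π : Equiv.Perm (Fin (m+1))) (hQ : QP π) (j : Fin (m+1)) (hmax : MaxT π j) :
    ((π j : ℕ)) + dlt (Phi π) j = (j : ℕ) + dtot (Phi π) := by
  classical
  rw [val_card]
  have hset : (univ.filter fun j' => π j' < π j)
      = (univ.filter fun j' => j' < j) ∪ (univ.filter fun j' => j < j' ∧ MinT π j') := by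
    ext j'
    simp only [mem_filter, mem_univ, true_and, Finset.mem_union]
    constructor
    · intro hlt
      have hne : j' ≠ j := fun h => by rw [h] at hlt; exact lt_irrefl _ hlt
      rcases lt_or_gt_of_ne hne with h | h
      · exact Or.inl h
      · refine Or.inr ⟨h, ?_⟩
        rcases hQ j' with hmax' | hmin'
        · exact absurd hlt (asymm (hmax' j h))
        · exact hmin'
    · rintro (h | ⟨hgt, hmin'⟩)
      · exact hmax j' h
      · exact hmin' j hgt
  rw [hset, Finset.card_union_of_disjoint (by
    rw [Finset.disjoint_filter]
    intro x _ hx ⟨hx2, _⟩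
    exact absurd hx2 (asymm hx))]
  rw [card_lt_fin]
  have := card_min_after π hQ j
  omega

lemma Phi_inj (π τ : Equiv.Perm (Fin (m+1))) (hπ : QP π) (hτ : QP τ) (h : Phi π = Phi τ) :
    π = τ := by
  have key : ∀ j, ((π j : ℕ)) = ((τ j : ℕ)) := by
    intro j
    induction j using Fin.cases with
    | zero =>
      have h1 := val_min π hπ 0 (fun i hi => absurd hi (Fin.not_lt_zero _))
      have h2 := val_min τ hτ 0 (fun i hi => absurd hi (Fin.not_lt_zero _))
      rw [h] at h1
      omega
    | succ i =>
      cases hw : Phi π i with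
      | false =>
        have h1 := val_min π hπ i.succ ((minT_iff π hπ i).mpr hw)
        have h2 := val_min τ hτ i.succ ((minT_iff τ hτ i).mpr (h ▸ hw))
        rw [h] at h1
        omega
      | true =>
        have hmπ : MaxT π i.succ := by
          rcases hπ i.succ with hM | hm
          · exact hM
          · rw [(minT_iff π hπ i).mp hm] at hw; exact absurd hw (by simp)
        have hmτ : MaxT τ i.succ := by
          rcases hτ i.succ with hM | hm
          · exact hM
          · exfalso
            have hf : Phi τ i = false := (minT_iff τ hτ i).mp hm
            rw [← h, hw] at hf
            exact absurd hf (by simp)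
        have h1 := val_max π hπ i.succ hmπ
        have h2 := val_max τ hτ i.succ hmτ
        rw [h] at h1
        omega
  exact Equiv.ext fun j => Fin.ext (key j)


def dle (w : Fin m → Bool) (i : Fin m) : ℕ :=
  (univ.filter fun i' : Fin m => (i' : ℕ) ≤ (i : ℕ) ∧ w i' = false).card
def ale (w : Fin m → Bool) (i : Fin m) : ℕ :=
  (univ.filter fun i' : Fin m => (i' : ℕ) ≤ (i : ℕ) ∧ w i' = true).card

def fval (w : Fin m → Bool) : Fin (m+1) → ℕ :=
  Fin.cases (dtot w) (fun i => if w i then dtot w + ale w i else dtot w - dle w i)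

lemma dle_le_dtot (w : Fin m → Bool) (i : Fin m) : dle w i ≤ dtot w := by
  unfold dle dtot
  exact Finset.card_le_card (by intro x; simp only [mem_filter, mem_univ, true_and]; tauto)

lemma dle_pos (w : Fin m → Bool) (i : Fin m) (h : w i = false) : 1 ≤ dle w i := by
  unfold dle
  exact Finset.card_pos.mpr ⟨i, by simp [h]⟩

lemma ale_pos (w : Fin m → Bool) (i : Fin m) (h : w i = true) : 1 ≤ ale w i := by
  unfold ale
  exact Finset.card_pos.mpr ⟨i, by simp [h]⟩

lemma dtot_add_ale_le (w : Fin m → Bool) (i : Fin m) : dtot w + ale w i ≤ m := by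
  have hsplit := Finset.card_filter_add_card_filter_not
      (s := (univ : Finset (Fin m))) (p := fun i => w i = false)
  have hale : ale w i ≤ (univ.filter fun i' => ¬ (w i' = false)).card := by
    unfold ale
    exact Finset.card_le_card (by intro x; simp only [mem_filter, mem_univ, true_and]; intro ⟨_, h⟩; simp [h])
  have : (univ : Finset (Fin m)).card = m := by simp
  unfold dtot ale at *
  omega

lemma dtot_le (w : Fin m → Bool) : dtot w ≤ m := by
  have : (univ : Finset (Fin m)).card = m := by simp
  exact le_trans (Finset.card_le_card (Finset.subset_univ _)) (le_of_eq this)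

lemma dle_mono (w : Fin m → Bool) (i' i : Fin m) (h : (i' : ℕ) < (i : ℕ)) (hw : w i = false) :
    dle w i' < dle w i := by
  unfold dle
  apply Finset.card_lt_card
  constructor
  · intro x
    simp only [mem_filter, mem_univ, true_and]
    rintro ⟨h1, h2⟩
    exact ⟨by omega, h2⟩
  · intro hsub
    have := hsub (by simp [hw] : i ∈ univ.filter fun x : Fin m => (x : ℕ) ≤ (i : ℕ) ∧ w x = false)
    simp at this
    omega

lemma ale_mono (w : Fin m → Bool) (i' i : Fin m) (h : (i' : ℕ) < (i : ℕ)) (hw : w i = true) :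
    ale w i' < ale w i := by
  unfold ale
  apply Finset.card_lt_card
  constructor
  · intro x
    simp only [mem_filter, mem_univ, true_and]
    rintro ⟨h1, h2⟩
    exact ⟨by omega, h2⟩
  · intro hsub
    have := hsub (by simp [hw] : i ∈ univ.filter fun x : Fin m => (x : ℕ) ≤ (i : ℕ) ∧ w x = true)
    simp at this
    omega

lemma fval_succ_true (w : Fin m → Bool) (i : Fin m) (h : w i = true) :
    fval w i.succ = dtot w + ale w i := by simp [fval, h]

lemma fval_succ_false (w : Fin m → Bool) (i : Fin m) (h : w i = false) :
    fval w i.succ = dtot w - dle w i := by simp [fval, h]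

lemma fval_zero (w : Fin m → Bool) : fval w 0 = dtot w := rfl

lemma fval_key (w : Fin m → Bool) (i : Fin m) (i' : Fin (m+1)) (hlt : i' < i.succ) :
    (w i = false → fval w i.succ < fval w i') ∧ (w i = true → fval w i' < fval w i.succ) := by
  induction i' using Fin.cases with
  | zero =>
    rw [fval_zero]
    constructor
    · intro h
      rw [fval_succ_false w i h]
      have := dle_pos w i h
      have := dle_le_dtot w i
      omega
    · intro h
      rw [fval_succ_true w i h]
      have := ale_pos w i h
      omega
  | succ i'' =>
    have hlt' : (i'' : ℕ) < (i : ℕ) := by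
      rw [Fin.lt_def] at hlt; simp at hlt; omega
    cases hw'' : w i'' with
    | true =>
      rw [fval_succ_true w i'' hw'']
      constructor
      · intro h
        rw [fval_succ_false w i h]
        have := ale_pos w i'' hw''
        have := dle_le_dtot w i
        omega
      · intro h
        rw [fval_succ_true w i h]
        have := ale_mono w i'' i hlt' h
        omega
    | false =>
      rw [fval_succ_false w i'' hw'']
      constructor
      · intro h
        rw [fval_succ_false w i h]
        have := dle_mono w i'' i hlt' h
        have := dle_le_dtot w i
        have := dle_le_dtot w i''
        omega
      · intro h
        rw [fval_succ_true w i h]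
        have := dle_le_dtot w i''
        have := ale_pos w i h
        omega

lemma fval_lt (w : Fin m → Bool) (j : Fin (m+1)) : fval w j < m + 1 := by
  induction j using Fin.cases with
  | zero => rw [fval_zero]; have := dtot_le w; omega
  | succ i =>
    cases hw : w i with
    | true => rw [fval_succ_true w i hw]; have := dtot_add_ale_le w i; omega
    | false => rw [fval_succ_false w i hw]; have := dtot_le w; omega

def ffun (w : Fin m → Bool) (j : Fin (m+1)) : Fin (m+1) := ⟨fval w j, fval_lt w j⟩

lemma ffun_inj (w : Fin m → Bool) : Function.Injective (ffun w) := by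
  intro a b hab
  by_contra hne
  rcases lt_or_gt_of_ne hne with hlt | hlt
  case _ =>
    induction b using Fin.cases with
    | zero => exact absurd hlt (Fin.not_lt_zero _)
    | succ i =>
      have hk := fval_key w i a hlt
      have hv : fval w a = fval w i.succ := congrArg Fin.val hab
      cases hw : w i with
      | false => have := hk.1 hw; omega
      | true => have := hk.2 hw; omega
  case _ =>
    induction a using Fin.cases with
    | zero => exact absurd hlt (Fin.not_lt_zero _)
    | succ i =>
      have hk := fval_key w i b hlt
      have hv : fval w i.succ = fval w b := congrArg Fin.val hab
      cases hw : w i with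
      | false => have := hk.1 hw; omega
      | true => have := hk.2 hw; omega

noncomputable def fperm (w : Fin m → Bool) : Equiv.Perm (Fin (m+1)) :=
  Equiv.ofBijective (ffun w) (Finite.injective_iff_bijective.mp (ffun_inj w))

lemma fperm_apply (w : Fin m → Bool) (j : Fin (m+1)) : fperm w j = ffun w j := rfl



lemma fperm_Q (w : Fin m → Bool) : QP (fperm w) := by
  intro j
  induction j using Fin.cases with
  | zero => left; intro i hi; exact absurd hi (Fin.not_lt_zero _)
  | succ i =>
    cases hw : w i with
    | false =>
      right; intro i' hi'
      have := (fval_key w i i' hi').1 hw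
      simpa [fperm_apply, ffun, Fin.lt_def] using this
    | true =>
      left; intro i' hi'
      have := (fval_key w i i' hi').2 hw
      simpa [fperm_apply, ffun, Fin.lt_def] using this

lemma fperm_Phi (w : Fin m → Bool) : Phi (fperm w) = w := by
  funext i
  have hcs : i.castSucc < i.succ := Fin.castSucc_lt_succ (i := i)
  cases hw : w i with
  | false =>
    have hk := (fval_key w i i.castSucc hcs).1 hw
    simp only [Phi, fperm_apply, ffun, decide_eq_false_iff_not, Fin.lt_def]
    omega
  | true =>
    have hk := (fval_key w i i.castSucc hcs).2 hw
    simp only [Phi, fperm_apply, ffun, decide_eq_true_eq, Fin.lt_def]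
    omega

lemma udrP_eq (π : Equiv.Perm (Fin (m+1))) : udrP π = chgL (true :: List.ofFn (Phi π)) + 1 := by
  have hchain : (List.ofFn ⇑π).Chain' (· ≠ ·) :=
    List.Pairwise.isChain (List.nodup_ofFn.mpr π.injective)
  have hne : (List.ofFn ⇑π) ≠ [] := List.ne_nil_of_length_pos (by simp)
  rw [udrP, udr_eq _ hchain hne, ascL_ofFn m ⇑π]
  rfl

lemma perm_inv_apply_self (π : Equiv.Perm (Fin (m+1))) (x : Fin (m+1)) : π⁻¹ (π x) = x :=
  π.symm_apply_apply x

lemma perm_apply_inv_self (π : Equiv.Perm (Fin (m+1))) (x : Fin (m+1)) : π (π⁻¹ x) = x :=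
  π.apply_symm_apply x

lemma pk_iff (π : Equiv.Perm (Fin (m+1))) : pkP π⁻¹ = 0 ↔ QP π := by
  rw [pkP, peaks_zero]
  have hlen : (List.ofFn ⇑π⁻¹).length = m + 1 := by simp
  constructor
  · intro h j
    have h' : ∀ (i : ℕ) (hi : i + 2 < m + 1),
        ¬ (π⁻¹ ⟨i, by omega⟩ < π⁻¹ ⟨i+1, by omega⟩ ∧ π⁻¹ ⟨i+2, by omega⟩ < π⁻¹ ⟨i+1, by omega⟩) := by
      intro i hi
      have hthis := h i (by rw [hlen]; omega)
      simp only [List.getElem_ofFn] at hthis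
      exact hthis
    by_contra hc
    push_neg at hc
    obtain ⟨hnmax, hnmin⟩ := hc
    rw [MaxT] at hnmax; rw [MinT] at hnmin
    push_neg at hnmax hnmin
    obtain ⟨i1, hi1, hle1⟩ := hnmax
    obtain ⟨i2, hi2, hle2⟩ := hnmin
    have hb : π j < π i1 :=
      lt_of_le_of_ne hle1 (fun he => absurd (π.injective he) (ne_of_gt hi1))
    have hc2 : π i2 < π j :=
      lt_of_le_of_ne hle2 (fun he => absurd (π.injective he) (ne_of_lt hi2))
    obtain ⟨u, hu_mem, hu_max⟩ := Finset.exists_max_image (Finset.Icc (π i2) (π i1))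
      (fun x => π⁻¹ x) ⟨π j, by rw [Finset.mem_Icc]; exact ⟨le_of_lt hc2, le_of_lt hb⟩⟩
    have hinvv : π⁻¹ (π j) = j := perm_inv_apply_self π j
    have hju : j ≤ π⁻¹ u := by
      have := hu_max (π j) (by rw [Finset.mem_Icc]; exact ⟨le_of_lt hc2, le_of_lt hb⟩)
      rwa [hinvv] at this
    obtain ⟨hcu0, hub0⟩ := Finset.mem_Icc.mp hu_mem
    have hcu : π i2 < u := by
      refine lt_of_le_of_ne hcu0 (fun he => ?_)
      have h3 : π⁻¹ (π i2) = π⁻¹ u := congrArg _ he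
      rw [perm_inv_apply_self] at h3
      have h4 : i2 < π⁻¹ u := lt_of_lt_of_le hi2 hju
      rw [← h3] at h4
      exact lt_irrefl _ h4
    have hub : u < π i1 := by
      refine lt_of_le_of_ne hub0 (fun he => ?_)
      have h3 : π⁻¹ u = i1 := by rw [he, perm_inv_apply_self]
      have h4 : i1 < π⁻¹ u := lt_of_lt_of_le hi1 hju
      rw [h3] at h4
      exact lt_irrefl _ h4
    have h1u : 1 ≤ (u : ℕ) := by
      have : ((π i2 : ℕ)) < (u : ℕ) := hcu
      omega
    have hum : (u : ℕ) < m := by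
      have : (u : ℕ) < ((π i1 : ℕ)) := hub
      have := (π i1).isLt
      omega
    have hmem1 : (⟨(u:ℕ) - 1, by omega⟩ : Fin (m+1)) ∈ Finset.Icc (π i2) (π i1) := by
      rw [Finset.mem_Icc]
      constructor
      · rw [Fin.le_def]; simp; omega
      · rw [Fin.le_def]; simp; omega
    have hmem2 : (⟨(u:ℕ) + 1, by omega⟩ : Fin (m+1)) ∈ Finset.Icc (π i2) (π i1) := by
      rw [Finset.mem_Icc]
      constructor
      · rw [Fin.le_def]; simp; omega
      · rw [Fin.le_def]; simp; omega
    have a1 : π⁻¹ (⟨(u:ℕ) - 1, by omega⟩ : Fin (m+1)) < π⁻¹ u := by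
      refine lt_of_le_of_ne (hu_max _ hmem1) (fun he => ?_)
      have : (⟨(u:ℕ) - 1, by omega⟩ : Fin (m+1)) = u := π⁻¹.injective he
      have := congrArg Fin.val this
      simp at this
      omega
    have a2 : π⁻¹ (⟨(u:ℕ) + 1, by omega⟩ : Fin (m+1)) < π⁻¹ u := by
      refine lt_of_le_of_ne (hu_max _ hmem2) (fun he => ?_)
      have : (⟨(u:ℕ) + 1, by omega⟩ : Fin (m+1)) = u := π⁻¹.injective he
      have := congrArg Fin.val this
      simp at this
    have hmid : (⟨(u:ℕ) - 1 + 1, by omega⟩ : Fin (m+1)) = u := Fin.ext (by simp; omega)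
    refine h' ((u:ℕ) - 1) (by omega) ⟨?_, ?_⟩
    · exact lt_of_lt_of_eq a1 (congrArg ⇑π⁻¹ hmid).symm
    · refine lt_of_lt_of_eq (lt_of_eq_of_lt (congrArg ⇑π⁻¹ ?_) a2) (congrArg ⇑π⁻¹ hmid).symm
      apply Fin.ext; simp; omega
  · intro hQ i hi
    rw [hlen] at hi
    simp only [List.getElem_ofFn]
    rintro ⟨h1, h2⟩
    rcases hQ (π⁻¹ ⟨i+1, by omega⟩) with hmax | hmin
    · have hlt := hmax (π⁻¹ ⟨i+2, by omega⟩) h2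
      rw [perm_apply_inv_self, perm_apply_inv_self, Fin.lt_def] at hlt
      simp at hlt
    · have hlt := hmin (π⁻¹ ⟨i, by omega⟩) h1
      rw [perm_apply_inv_self, perm_apply_inv_self, Fin.lt_def] at hlt
      simp at hlt

lemma count_words : ∀ (m K : ℕ) (b : Bool),
    Nat.card {w : Fin m → Bool // chgL (b :: List.ofFn w) = K} = Nat.choose m K
  | 0, K, b => by
    have hz : ∀ w : Fin 0 → Bool, chgL (b :: List.ofFn w) = 0 := by
      intro w
      have : List.ofFn w = [] := by simp
      rw [this]
      rfl
    cases K with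
    | zero =>
      have : Unique {w : Fin 0 → Bool // chgL (b :: List.ofFn w) = 0} :=
        ⟨⟨⟨fun i => i.elim0, hz _⟩⟩, fun x => Subtype.ext (funext fun i => i.elim0)⟩
      simp only [Nat.card_unique, Nat.choose_self]
    | succ K' =>
      have : IsEmpty {w : Fin 0 → Bool // chgL (b :: List.ofFn w) = K' + 1} :=
        ⟨fun x => by have h2 := x.2; rw [hz x.1] at h2; exact Nat.succ_ne_zero K' h2.symm⟩
      rw [Nat.card_of_isEmpty, Nat.choose_zero_succ]
  | m+1, K, b => by
    have hofn : ∀ (x : Bool) (w' : Fin m → Bool),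
        List.ofFn (Fin.cons x w' : Fin (m+1) → Bool) = x :: List.ofFn w' := by
      intro x w'
      rw [List.ofFn_succ]
      simp
    have key : ∀ (x : Bool) (w' : Fin m → Bool),
        chgL (b :: List.ofFn (Fin.cons x w' : Fin (m+1) → Bool))
          = (if x = b then 0 else 1) + chgL (x :: List.ofFn w') := by
      intro x w'
      rw [hofn]
      show (if b ≠ x then 1 else 0) + chgL (x :: List.ofFn w') = _
      by_cases hx : x = b
      · simp [hx]
      · simp [hx, Ne.symm hx]
    have key2 : ∀ (w : Fin (m+1) → Bool),
        chgL (b :: List.ofFn w) = (if w 0 = b then 0 else 1) + chgL (w 0 :: List.ofFn (Fin.tail w)) := by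
      intro w
      conv_lhs => rw [← Fin.cons_self_tail w]
      rw [key]
    have e : {w : Fin (m+1) → Bool // chgL (b :: List.ofFn w) = K}
        ≃ {w' : Fin m → Bool // chgL (b :: List.ofFn w') = K}
          ⊕ {w' : Fin m → Bool // 1 + chgL ((!b) :: List.ofFn w') = K} := by
      refine
        { toFun := fun p => if hx : p.1 0 = b
            then Sum.inl ⟨Fin.tail p.1, by
              have h2 := p.2
              rw [key2, hx] at h2
              simpa using h2⟩
            else Sum.inr ⟨Fin.tail p.1, by
              have h2 := p.2
              have hxb : p.1 0 = !b := by
                have : ∀ a c : Bool, a ≠ c → a = !c := by decide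
                exact this _ _ hx
              rw [key2, if_neg hx, hxb] at h2
              exact h2⟩
          invFun := fun q => match q with
            | Sum.inl ⟨w', h⟩ => ⟨Fin.cons b w', by rw [key]; simpa using h⟩
            | Sum.inr ⟨w', h⟩ => ⟨Fin.cons (!b) w', by
                rw [key]
                rw [if_neg ((by decide : ∀ c : Bool, ¬ ((!c) = c)) b)]
                omega⟩
          left_inv := ?_
          right_inv := ?_ }
      · rintro ⟨w, hw⟩
        have hself : Fin.cons (w 0) (Fin.tail w) = w := Fin.cons_self_tail w
        dsimp only
        by_cases hx : w 0 = b
        · rw [dif_pos hx]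
          refine Subtype.ext ?_
          rw [hx] at hself
          exact hself
        · rw [dif_neg hx]
          refine Subtype.ext ?_
          have hxb : w 0 = !b := by
            have : ∀ a c : Bool, a ≠ c → a = !c := by decide
            exact this _ _ hx
          rw [hxb] at hself
          exact hself
      · rintro (⟨w', h⟩ | ⟨w', h⟩)
        · dsimp only
          show dite _ _ _ = _
          rw [dif_pos (by simp : (Fin.cons b w' : Fin (m+1) → Bool) 0 = b)]
          congr 1
        · dsimp only
          show dite _ _ _ = _
          rw [dif_neg (by simp [((by decide : ∀ c : Bool, ¬ ((!c) = c)) b)] :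
            ¬ (Fin.cons (!b) w' : Fin (m+1) → Bool) 0 = b)]
          congr 1
    rw [Nat.card_congr e, Nat.card_sum, count_words m K b]
    cases K with
    | zero =>
      have : IsEmpty {w' : Fin m → Bool // 1 + chgL ((!b) :: List.ofFn w') = 0} :=
        ⟨fun x => by have := x.2; omega⟩
      rw [Nat.card_of_isEmpty]
      simp
    | succ K' =>
      have e2 : {w' : Fin m → Bool // 1 + chgL ((!b) :: List.ofFn w') = K' + 1}
          ≃ {w' : Fin m → Bool // chgL ((!b) :: List.ofFn w') = K'} :=
        Equiv.subtypeEquivRight (fun w' => by omega)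
      rw [Nat.card_congr e2, count_words m K' (!b)]
      rw [Nat.choose_succ_succ]
      simp only [Nat.succ_eq_add_one]
      omega

end UdrAux

theorem card_udr_k_ipk_zero (n k : ℕ) (hn : 1 ≤ n) (hk : 1 ≤ k) :
    Nat.card {π : Equiv.Perm (Fin n) // udrP π = k ∧ pkP π⁻¹ = 0}
      = Nat.choose (n - 1) (k - 1) := by
  obtain ⟨m, rfl⟩ : ∃ m, n = m + 1 := ⟨n - 1, by omega⟩
  obtain ⟨K, rfl⟩ : ∃ K, k = K + 1 := ⟨k - 1, by omega⟩
  simp only [Nat.add_sub_cancel]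
  have e : {π : Equiv.Perm (Fin (m+1)) // udrP π = K + 1 ∧ pkP π⁻¹ = 0}
      ≃ {w : Fin m → Bool // UdrAux.chgL (true :: List.ofFn w) = K} := by
    apply Equiv.ofBijective (fun p => ⟨UdrAux.Phi p.1, by
      have h1 := UdrAux.udrP_eq p.1
      have h2 := p.2.1
      omega⟩)
    constructor
    · rintro ⟨π, hπ⟩ ⟨τ, hτ⟩ hh
      simp only [Subtype.mk.injEq] at hh ⊢
      exact UdrAux.Phi_inj π τ ((UdrAux.pk_iff π).mp hπ.2) ((UdrAux.pk_iff τ).mp hτ.2) hh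
    · rintro ⟨w, hw⟩
      refine ⟨⟨UdrAux.fperm w, ?_, ?_⟩, ?_⟩
      · rw [UdrAux.udrP_eq, UdrAux.fperm_Phi, hw]
      · exact (UdrAux.pk_iff _).mpr (UdrAux.fperm_Q w)
      · simp [UdrAux.fperm_Phi]
  rw [Nat.card_congr e, UdrAux.count_words]
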